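/- Let K_n be the complete graph on n ≥ 2 vertices. Let G_n be the graph obtained from K_n by subdividing each edge twice (replacing each edge by a path with 2 internal vertices). Then gap(G_n) = 0, i.e., stp(G_n) = |V(G_n)| = n + 2·C(n,2). -/

import Mathlib

structure LoopGraph (V : Type*) where
  Adj : V → V → Prop
  symm : ∀ u v, Adj u v → Adj v u

namespace LoopGraph

variable {V : Type*} [Fintype V] [DecidableEq V]

/-- `C` is a set-join cover of `G`: a finite family of set-joins `K ∨ L`
(with `K`, `L` nonempty) whose edge sets union to `E(G)`. -/
def IsCover (G : LoopGraph V) (C : Finset (Finset V × Finset V)) : Prop :=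
  (∀ p ∈ C, p.1.Nonempty ∧ p.2.Nonempty) ∧
  (∀ u v : V, G.Adj u v ↔ ∃ p ∈ C, (u ∈ p.1 ∧ v ∈ p.2) ∨ (u ∈ p.2 ∧ v ∈ p.1))

/-- The component set of a set-join cover: all sets occurring as a part. -/
def sjComponents (C : Finset (Finset V × Finset V)) : Finset (Finset V) :=
  C.image Prod.fst ∪ C.image Prod.snd

/-- The SNT-rank: minimal number of distinct components over all set-join covers. -/
noncomputable def stp (G : LoopGraph V) : ℕ :=
  sInf {n | ∃ C : Finset (Finset V × Finset V), G.IsCover C ∧ (sjComponents C).card = n}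

/-- `gap G = |V(G)| - stp G`. -/
noncomputable def gap (G : LoopGraph V) : ℕ :=
  Fintype.card V - G.stp

/-- No vertices `u₁ ≠ u₂`, `v₁ ≠ v₂` with all four pairs `{uᵢ, vⱼ}` edges. -/
def StronglyC4Free (G : LoopGraph V) : Prop :=
  ¬ ∃ u₁ u₂ v₁ v₂ : V, u₁ ≠ u₂ ∧ v₁ ≠ v₂ ∧
    G.Adj u₁ v₁ ∧ G.Adj u₁ v₂ ∧ G.Adj u₂ v₁ ∧ G.Adj u₂ v₂

/-- Induced subgraph on a finset of vertices. -/
def induce (G : LoopGraph V) (s : Finset V) : LoopGraph {x // x ∈ s} :=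
  ⟨fun a b => G.Adj a b, fun _ _ h => G.symm _ _ h⟩

/-- Degree of a vertex; a loop counts twice. -/
noncomputable def deg (G : LoopGraph V) (x : V) : ℕ :=
  {y | G.Adj x y}.ncard + {y | y = x ∧ G.Adj x y}.ncard

end LoopGraph

open LoopGraph

/-- `zeta ends` is the graph obtained from the multigraph with edge set `E`
and endpoint map `ends` by replacing every edge `e` with endpoints `(x, y)`
by the path `x — (e,0) — (e,1) — y` (each edge subdivided twice). -/
def zeta {V E : Type*} (ends : E → V × V) : LoopGraph (V ⊕ E × Fin 2) where
  Adj x y :=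
    (∃ e : E, (x = Sum.inl (ends e).1 ∧ y = Sum.inr (e, 0)) ∨
              (y = Sum.inl (ends e).1 ∧ x = Sum.inr (e, 0))) ∨
    (∃ e : E, (x = Sum.inr (e, 0) ∧ y = Sum.inr (e, 1)) ∨
              (y = Sum.inr (e, 0) ∧ x = Sum.inr (e, 1))) ∨
    (∃ e : E, (x = Sum.inl (ends e).2 ∧ y = Sum.inr (e, 1)) ∨
              (y = Sum.inl (ends e).2 ∧ x = Sum.inr (e, 1)))
  symm := by
    rintro x y (⟨e, h | h⟩ | ⟨e, h | h⟩ | ⟨e, h | h⟩)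
    · exact Or.inl ⟨e, Or.inr h⟩
    · exact Or.inl ⟨e, Or.inl h⟩
    · exact Or.inr (Or.inl ⟨e, Or.inr h⟩)
    · exact Or.inr (Or.inl ⟨e, Or.inl h⟩)
    · exact Or.inr (Or.inr ⟨e, Or.inr h⟩)
    · exact Or.inr (Or.inr ⟨e, Or.inl h⟩)

/-- The graph obtained from the complete graph `K n` by subdividing every edge
twice. -/
def subdivKn (n : ℕ) :
    LoopGraph (Fin n ⊕ ({p : Fin n × Fin n // p.1 < p.2} × Fin 2)) :=
  zeta fun e => (e.1.1, e.1.2)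

namespace Stmt15

variable {n : ℕ}

abbrev KE (n : ℕ) := {p : Fin n × Fin n // p.1 < p.2}
abbrev KV (n : ℕ) := Fin n ⊕ (KE n × Fin 2)

lemma adj0 (e : KE n) (z : KV n) :
    (subdivKn n).Adj z (Sum.inr (e, 0)) ↔ z = Sum.inl e.1.1 ∨ z = Sum.inr (e, 1) := by
  constructor
  · rintro (⟨f, ⟨hz, h⟩ | ⟨h, hz⟩⟩ | ⟨f, ⟨hz, h⟩ | ⟨h, hz⟩⟩ | ⟨f, ⟨hz, h⟩ | ⟨h, hz⟩⟩) <;>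
      simp_all [Prod.ext_iff]
  · rintro (rfl | rfl)
    · exact Or.inl ⟨e, Or.inl ⟨rfl, rfl⟩⟩
    · exact Or.inr (Or.inl ⟨e, Or.inr ⟨rfl, rfl⟩⟩)

lemma adj1 (e : KE n) (z : KV n) :
    (subdivKn n).Adj z (Sum.inr (e, 1)) ↔ z = Sum.inl e.1.2 ∨ z = Sum.inr (e, 0) := by
  constructor
  · rintro (⟨f, ⟨hz, h⟩ | ⟨h, hz⟩⟩ | ⟨f, ⟨hz, h⟩ | ⟨h, hz⟩⟩ | ⟨f, ⟨hz, h⟩ | ⟨h, hz⟩⟩) <;>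
      simp_all [Prod.ext_iff]
  · rintro (rfl | rfl)
    · exact Or.inr (Or.inr ⟨e, Or.inl ⟨rfl, rfl⟩⟩)
    · exact Or.inr (Or.inl ⟨e, Or.inl ⟨rfl, rfl⟩⟩)

lemma not_adj_inl (v w : Fin n) : ¬ (subdivKn n).Adj (Sum.inl v) (Sum.inl w) := by
  rintro (⟨f, ⟨hz, h⟩ | ⟨h, hz⟩⟩ | ⟨f, ⟨hz, h⟩ | ⟨h, hz⟩⟩ | ⟨f, ⟨hz, h⟩ | ⟨h, hz⟩⟩) <;> simp_all

/-- The far subdivision vertex on the edge `{v, w}`, seen from `v` (i.e. the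
subdivision vertex adjacent to `w`). -/
def far (v w : Fin n) : KV n :=
  if h : v < w then Sum.inr (⟨(v, w), h⟩, 1)
  else if h' : w < v then Sum.inr (⟨(w, v), h'⟩, 0)
  else Sum.inl v

/-- The near subdivision vertex on the edge `{v, w}`, seen from `v`. -/
def near (v w : Fin n) : KV n :=
  if h : v < w then Sum.inr (⟨(v, w), h⟩, 0)
  else if h' : w < v then Sum.inr (⟨(w, v), h'⟩, 1)
  else Sum.inl v

lemma adj_near {v w : Fin n} (hvw : v ≠ w) (z : KV n) :
    (subdivKn n).Adj z (near v w) ↔ z = Sum.inl v ∨ z = far v w := by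
  rcases lt_or_gt_of_ne hvw with h | h
  · rw [near, far, dif_pos h, dif_pos h, adj0]
  · rw [near, far, dif_neg (asymm h), dif_neg (asymm h), dif_pos h, dif_pos h, adj1]

lemma adj_far {v w : Fin n} (hvw : v ≠ w) (z : KV n) :
    (subdivKn n).Adj z (far v w) ↔ z = Sum.inl w ∨ z = near v w := by
  rcases lt_or_gt_of_ne hvw with h | h
  · rw [near, far, dif_pos h, dif_pos h, adj1]
  · rw [near, far, dif_neg (asymm h), dif_neg (asymm h), dif_pos h, dif_pos h, adj0]

lemma far_ne_inl {v w : Fin n} (hvw : v ≠ w) (u : Fin n) : far v w ≠ Sum.inl u := by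
  rcases lt_or_gt_of_ne hvw with h | h <;>
    simp [far, h, asymm h]

lemma near_ne_inl {v w : Fin n} (hvw : v ≠ w) (u : Fin n) : near v w ≠ Sum.inl u := by
  rcases lt_or_gt_of_ne hvw with h | h <;>
    simp [near, h, asymm h]

lemma inl_adj_far {v w u : Fin n} (hvw : v ≠ w)
    (h : (subdivKn n).Adj (Sum.inl u) (far v w)) : u = w := by
  rcases (adj_far hvw _).mp h with h' | h'
  · exact Sum.inl_injective h'
  · exact absurd h'.symm (near_ne_inl hvw u)

lemma far_fst_snd (e : KE n) : far e.1.1 e.1.2 = Sum.inr (e, 1) := by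
  rw [far, dif_pos e.2]

lemma far_snd_fst (e : KE n) : far e.1.2 e.1.1 = Sum.inr (e, 0) := by
  rw [far, dif_neg (asymm e.2), dif_pos e.2]

lemma pair_force {α : Type*} [DecidableEq α] {L : Finset α} {c x : α}
    (h : ∀ b ∈ L, b = c ∨ b = x) (hx : x ∈ L) (hne : L ≠ {x}) : L = {c, x} := by
  have hc : c ∈ L := by
    by_contra hc
    exact hne (Finset.eq_singleton_iff_unique_mem.mpr
      ⟨hx, fun b hb => (h b hb).resolve_left (fun hbc => hc (hbc ▸ hb))⟩)
  apply Finset.Subset.antisymm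
  · intro b hb
    rcases h b hb with rfl | rfl <;> simp
  · intro b hb
    rcases Finset.mem_insert.mp hb with rfl | hb
    · exact hc
    · rw [Finset.mem_singleton.mp hb]; exact hx

section Cover

variable {C : Finset (Finset (KV n) × Finset (KV n))}

lemma part_nbhd [Fintype (KV n)] [DecidableEq (KV n)] (hC : (subdivKn n).IsCover C)
    {u x : KV n} (h : (subdivKn n).Adj u x) :
    ∃ L ∈ sjComponents C, x ∈ L ∧ ∀ b ∈ L, (subdivKn n).Adj u b := by
  obtain ⟨p, hp, hcase⟩ := (hC.2 u x).mp h
  rcases hcase with ⟨hu, hx⟩ | ⟨hu, hx⟩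
  · exact ⟨p.2, Finset.mem_union_right _ (Finset.mem_image_of_mem _ hp), hx,
      fun b hb => (hC.2 u b).mpr ⟨p, hp, Or.inl ⟨hu, hb⟩⟩⟩
  · exact ⟨p.1, Finset.mem_union_left _ (Finset.mem_image_of_mem _ hp), hx,
      fun b hb => (hC.2 u b).mpr ⟨p, hp, Or.inr ⟨hu, hb⟩⟩⟩

lemma doubleton_mem (hC : (subdivKn n).IsCover C) {v w : Fin n} (hvw : v ≠ w)
    (hbad : ({far v w} : Finset (KV n)) ∉ sjComponents C) :
    ({Sum.inl v, far v w} : Finset (KV n)) ∈ sjComponents C := by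
  have hadj : (subdivKn n).Adj (near v w) (far v w) := (adj_far hvw _).mpr (Or.inr rfl)
  obtain ⟨L, hL, hxL, hall⟩ := part_nbhd hC hadj
  have hsub : ∀ b ∈ L, b = Sum.inl v ∨ b = far v w := fun b hb =>
    (adj_near hvw b).mp ((subdivKn n).symm _ _ (hall b hb))
  have := pair_force hsub hxL (fun hEq => hbad (hEq ▸ hL))
  exact this ▸ hL

lemma orig_doubleton_mem (hC : (subdivKn n).IsCover C) {v w : Fin n} (hvw : v ≠ w)
    (hbad : ({Sum.inl v} : Finset (KV n)) ∉ sjComponents C) :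
    ({Sum.inl v, far v w} : Finset (KV n)) ∈ sjComponents C := by
  have hadj : (subdivKn n).Adj (near v w) (Sum.inl v) :=
    (subdivKn n).symm _ _ ((adj_near hvw _).mpr (Or.inl rfl))
  obtain ⟨L, hL, hxL, hall⟩ := part_nbhd hC hadj
  have hsub : ∀ b ∈ L, b = far v w ∨ b = Sum.inl v := fun b hb =>
    ((adj_near hvw b).mp ((subdivKn n).symm _ _ (hall b hb))).symm
  have := pair_force hsub hxL (fun hEq => hbad (hEq ▸ hL))
  rw [Finset.pair_comm]
  exact this ▸ hL

lemma star_mem (hC : (subdivKn n).IsCover C) {v w : Fin n} (hvw : v ≠ w) :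
    ∃ L ∈ sjComponents C, far v w ∈ L ∧
      ∀ b ∈ L, (subdivKn n).Adj (Sum.inl w) b := by
  have hadj : (subdivKn n).Adj (Sum.inl w) (far v w) := (adj_far hvw _).mpr (Or.inl rfl)
  exact part_nbhd hC hadj

end Cover

/-- A fixed-point-free injective self-map of `Fin n` (for `n ≥ 2`). -/
def shift (n : ℕ) (v : Fin n) : Fin n :=
  ⟨if v.val + 1 = n then 0 else v.val + 1, by have := v.isLt; split <;> omega⟩

lemma shift_ne (hn : 2 ≤ n) (v : Fin n) : v ≠ shift n v := by
  intro h
  have h1 := congrArg Fin.val h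
  have h2 := v.isLt
  simp only [shift] at h1
  split at h1 <;> omega

lemma shift_inj {v v' : Fin n} (h : shift n v = shift n v') : v = v' := by
  have h1 := v.isLt
  have h2 := v'.isLt
  have h3 := congrArg Fin.val h
  simp only [shift] at h3
  apply Fin.ext
  split at h3 <;> split at h3 <;> omega

/-- The specification of the component assigned to vertex `y` by the injection. -/
def Spec (S : Finset (Finset (KV n))) (y : KV n) (D : Finset (KV n)) : Prop :=
  (D = {y} ∧ {y} ∈ S) ∨
  ({y} ∉ S ∧ (
    (∃ v : Fin n, (∃ e : KE n, ∃ i : Fin 2, y = Sum.inr (e, i)) ∧ D = {Sum.inl v, y}) ∨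
    (∃ v w : Fin n, y = Sum.inl v ∧ v ≠ w ∧ ({far v w} : Finset (KV n)) ∈ S ∧
      D = {Sum.inl v, far v w}) ∨
    (∃ v : Fin n, y = Sum.inl v ∧ ({far v (shift n v)} : Finset (KV n)) ∉ S ∧
      far v (shift n v) ∈ D ∧ ∀ b ∈ D, (subdivKn n).Adj (Sum.inl (shift n v)) b)))

lemma spec_inj (hn : 2 ≤ n) {S : Finset (Finset (KV n))} {y y' : KV n} {D : Finset (KV n)}
    (h : Spec S y D) (h' : Spec S y' D) : y = y' := by
  rcases h with ⟨hD, hyS⟩ | ⟨hyS, ⟨v, ⟨e, i, hy⟩, hD⟩ | ⟨v, w, hy, hvw, hfS, hD⟩ |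
      ⟨v, hy, hfS, hmem, hadj⟩⟩ <;>
    rcases h' with ⟨hD', hyS'⟩ | ⟨hyS', ⟨v', ⟨e', i', hy'⟩, hD'⟩ |
      ⟨v', w', hy', hvw', hfS', hD'⟩ | ⟨v', hy', hfS', hmem', hadj'⟩⟩
  -- AA
  · exact Finset.singleton_injective (hD ▸ hD')
  -- AB
  · have hm : y' ∈ D := by rw [hD']; simp
    have he : y' = y := Finset.mem_singleton.mp (hD ▸ hm)
    exact absurd (he ▸ hyS) hyS'
  -- AC
  · have hm : y' ∈ D := by rw [hD', hy']; simp
    have he : y' = y := Finset.mem_singleton.mp (hD ▸ hm)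
    exact absurd (he ▸ hyS) hyS'
  -- AD
  · have he : far v' (shift n v') = y := Finset.mem_singleton.mp (hD ▸ hmem')
    exact absurd (he ▸ hyS) hfS'
  -- BA
  · have hm : y ∈ D := by rw [hD]; simp
    have he : y = y' := Finset.mem_singleton.mp (hD' ▸ hm)
    exact absurd (he ▸ hyS') hyS
  -- BB
  · have hm : y ∈ D := by rw [hD]; simp
    rw [hD'] at hm
    rcases Finset.mem_insert.mp hm with h1 | h1
    · rw [hy] at h1; exact absurd h1 (by simp)
    · exact Finset.mem_singleton.mp h1
  -- BC
  · have hm : y ∈ D := by rw [hD]; simp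
    rw [hD'] at hm
    rcases Finset.mem_insert.mp hm with h1 | h1
    · rw [hy] at h1; exact absurd h1 (by simp)
    · rw [Finset.mem_singleton.mp h1] at hyS
      exact absurd hfS' hyS
  -- BD
  · exfalso
    have hm : Sum.inl v ∈ D := by rw [hD]; simp
    exact not_adj_inl _ _ (hadj' _ hm)
  -- CA
  · have hm : y ∈ D := by rw [hD, hy]; simp
    have he : y = y' := Finset.mem_singleton.mp (hD' ▸ hm)
    exact absurd (he ▸ hyS') hyS
  -- CB
  · have hm : y' ∈ D := by rw [hD']; simp
    rw [hD] at hm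
    rcases Finset.mem_insert.mp hm with h1 | h1
    · rw [hy'] at h1; exact absurd h1 (by simp)
    · rw [Finset.mem_singleton.mp h1] at hyS'
      exact absurd hfS hyS'
  -- CC
  · have hm : y ∈ D := by rw [hD, hy]; simp
    rw [hD'] at hm
    rcases Finset.mem_insert.mp hm with h1 | h1
    · rw [hy, hy']; rw [hy] at h1; exact h1
    · rw [hy] at h1
      exact absurd (Finset.mem_singleton.mp h1).symm (far_ne_inl hvw' v)
  -- CD
  · exfalso
    have hm : Sum.inl v ∈ D := by rw [hD]; simp
    exact not_adj_inl _ _ (hadj' _ hm)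
  -- DA
  · have he : far v (shift n v) = y' := Finset.mem_singleton.mp (hD' ▸ hmem)
    exact absurd (he ▸ hyS') hfS
  -- DB
  · exfalso
    have hm : Sum.inl v' ∈ D := by rw [hD']; simp
    exact not_adj_inl _ _ (hadj _ hm)
  -- DC
  · exfalso
    have hm : Sum.inl v' ∈ D := by rw [hD']; simp
    exact not_adj_inl _ _ (hadj _ hm)
  -- DD
  · have h1 : (subdivKn n).Adj (Sum.inl (shift n v')) (far v (shift n v)) := hadj' _ hmem
    have h2 : shift n v' = shift n v := inl_adj_far (shift_ne hn v) h1
    rw [hy, hy', shift_inj h2]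

lemma exists_assign (hn : 2 ≤ n) {C : Finset (Finset (KV n) × Finset (KV n))}
    (hC : (subdivKn n).IsCover C) (y : KV n) :
    ∃ D : Finset (KV n), D ∈ sjComponents C ∧ Spec (sjComponents C) y D := by
  classical
  set S := sjComponents C with hSdef
  by_cases hy : ({y} : Finset (KV n)) ∈ S
  · exact ⟨{y}, hy, Or.inl ⟨rfl, hy⟩⟩
  rcases y with v | ⟨e, i⟩
  · -- original vertex
    by_cases hgood : ∃ w : Fin n, v ≠ w ∧ ({far v w} : Finset (KV n)) ∈ S
    · obtain ⟨w, hvw, hfS⟩ := hgood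
      exact ⟨{Sum.inl v, far v w}, orig_doubleton_mem hC hvw hy,
        Or.inr ⟨hy, Or.inr (Or.inl ⟨v, w, rfl, hvw, hfS, rfl⟩)⟩⟩
    · push_neg at hgood
      have hfS : ({far v (shift n v)} : Finset (KV n)) ∉ S :=
        hgood (shift n v) (shift_ne hn v)
      obtain ⟨L, hL, hmem, hadj⟩ := star_mem hC (shift_ne hn v) (C := C)
      exact ⟨L, hL, Or.inr ⟨hy, Or.inr (Or.inr ⟨v, rfl, hfS, hmem, hadj⟩)⟩⟩
  · -- subdivision vertex
    fin_cases i
    · have hvw : e.1.2 ≠ e.1.1 := ne_of_gt e.2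
      have hfar : far e.1.2 e.1.1 = Sum.inr (e, 0) := far_snd_fst e
      have hbad : ({far e.1.2 e.1.1} : Finset (KV n)) ∉ S := by rw [hfar]; exact hy
      have hD := doubleton_mem hC hvw hbad
      rw [hfar] at hD
      exact ⟨{Sum.inl e.1.2, Sum.inr (e, 0)}, hD,
        Or.inr ⟨hy, Or.inl ⟨e.1.2, ⟨e, 0, rfl⟩, rfl⟩⟩⟩
    · have hvw : e.1.1 ≠ e.1.2 := ne_of_lt e.2
      have hfar : far e.1.1 e.1.2 = Sum.inr (e, 1) := far_fst_snd e
      have hbad : ({far e.1.1 e.1.2} : Finset (KV n)) ∉ S := by rw [hfar]; exact hy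
      have hD := doubleton_mem hC hvw hbad
      rw [hfar] at hD
      exact ⟨{Sum.inl e.1.1, Sum.inr (e, 1)}, hD,
        Or.inr ⟨hy, Or.inl ⟨e.1.1, ⟨e, 1, rfl⟩, rfl⟩⟩⟩

lemma lower_bound (hn : 2 ≤ n) {C : Finset (Finset (KV n) × Finset (KV n))}
    (hC : (subdivKn n).IsCover C) :
    Fintype.card (KV n) ≤ (sjComponents C).card := by
  classical
  have hA := fun y => exists_assign hn hC y
  set f : KV n → Finset (KV n) := fun y => (hA y).choose with hf
  have hmem : ∀ y, f y ∈ sjComponents C := fun y => (hA y).choose_spec.1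
  have hspec : ∀ y, Spec (sjComponents C) y (f y) := fun y => (hA y).choose_spec.2
  have := Finset.card_le_card_of_injOn (s := (Finset.univ : Finset (KV n)))
    (t := sjComponents C) f (fun y _ => hmem y)
    (fun y _ y' _ hEq => spec_inj hn (hspec y) (hEq ▸ hspec y'))
  simpa using this

lemma exists_adj (hn : 2 ≤ n) (y : KV n) : ∃ z : KV n, (subdivKn n).Adj y z := by
  rcases y with v | ⟨e, i⟩
  · exact ⟨near v (shift n v), (adj_near (shift_ne hn v) _).mpr (Or.inl rfl)⟩
  · fin_cases i
    · exact ⟨Sum.inr (e, 1), (subdivKn n).symm _ _ ((adj0 e _).mpr (Or.inr rfl))⟩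
    · exact ⟨Sum.inr (e, 0), (subdivKn n).symm _ _ ((adj1 e _).mpr (Or.inr rfl))⟩

lemma upper_bound (hn : 2 ≤ n) :
    ∃ C : Finset (Finset (KV n) × Finset (KV n)),
      (subdivKn n).IsCover C ∧ (sjComponents C).card = Fintype.card (KV n) := by
  classical
  set C : Finset (Finset (KV n) × Finset (KV n)) :=
    (Finset.univ.filter (fun q : KV n × KV n => (subdivKn n).Adj q.1 q.2)).image
      (fun q => ({q.1}, {q.2})) with hCdef
  have hmemC : ∀ p ∈ C, ∃ q : KV n × KV n, (subdivKn n).Adj q.1 q.2 ∧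
      p = ({q.1}, {q.2}) := by
    intro p hp
    obtain ⟨q, hq, rfl⟩ := Finset.mem_image.mp hp
    exact ⟨q, (Finset.mem_filter.mp hq).2, rfl⟩
  have hcov : (subdivKn n).IsCover C := by
    constructor
    · intro p hp
      obtain ⟨q, _, rfl⟩ := hmemC p hp
      exact ⟨Finset.singleton_nonempty _, Finset.singleton_nonempty _⟩
    · intro u v
      constructor
      · intro h
        refine ⟨({u}, {v}), Finset.mem_image.mpr ⟨(u, v),
          Finset.mem_filter.mpr ⟨Finset.mem_univ _, h⟩, rfl⟩, Or.inl ⟨by simp, by simp⟩⟩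
      · rintro ⟨p, hp, hcase⟩
        obtain ⟨q, hq, rfl⟩ := hmemC p hp
        rcases hcase with ⟨hu, hv⟩ | ⟨hu, hv⟩
        · rw [Finset.mem_singleton.mp hu, Finset.mem_singleton.mp hv]; exact hq
        · rw [Finset.mem_singleton.mp hu, Finset.mem_singleton.mp hv]
          exact (subdivKn n).symm _ _ hq
  refine ⟨C, hcov, ?_⟩
  have hcomp : sjComponents C = Finset.univ.image (fun y : KV n => ({y} : Finset (KV n))) := by
    apply Finset.Subset.antisymm
    · intro D hD
      rcases Finset.mem_union.mp hD with hD | hD <;>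
        obtain ⟨p, hp, rfl⟩ := Finset.mem_image.mp hD <;>
        obtain ⟨q, hq, rfl⟩ := hmemC p hp <;>
        exact Finset.mem_image.mpr ⟨_, Finset.mem_univ _, rfl⟩
    · intro D hD
      obtain ⟨y, _, rfl⟩ := Finset.mem_image.mp hD
      obtain ⟨z, hz⟩ := exists_adj hn y
      apply Finset.mem_union_left
      apply Finset.mem_image.mpr
      refine ⟨({y}, {z}), Finset.mem_image.mpr ⟨(y, z),
        Finset.mem_filter.mpr ⟨Finset.mem_univ _, hz⟩, rfl⟩, rfl⟩
  rw [hcomp, Finset.card_image_of_injective _ Finset.singleton_injective,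
    Finset.card_univ]

lemma card_KE : Fintype.card (KE n) = n.choose 2 := by
  classical
  have hs := Sym2.card_subtype_not_diag (α := Fin n)
  rw [Fintype.card_fin] at hs
  rw [← hs]
  apply Fintype.card_congr
  refine ⟨fun p => ⟨Sym2.mk p.1.1 p.1.2, ?_⟩, fun a => ⟨(Sym2.sortEquiv a.1).1, ?_⟩, ?_, ?_⟩
  · rcases p with ⟨⟨x, y⟩, hxy⟩
    simp only [Sym2.mk_isDiag_iff]
    exact ne_of_lt hxy
  · rcases a with ⟨a, ha⟩
    induction a using Sym2.ind with
    | _ x y =>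
      simp only [Sym2.mk_isDiag_iff] at ha
      simp only [Sym2.sortEquiv_apply_coe, Sym2.inf_mk, Sym2.sup_mk]
      exact inf_lt_sup.mpr ha
  · rintro ⟨⟨x, y⟩, hxy⟩
    apply Subtype.ext
    simp only [Sym2.sortEquiv_apply_coe, Sym2.inf_mk, Sym2.sup_mk]
    exact Prod.ext (inf_eq_left.mpr (le_of_lt hxy)) (sup_eq_right.mpr (le_of_lt hxy))
  · rintro ⟨a, ha⟩
    apply Subtype.ext
    exact Sym2.sortEquiv.left_inv a

lemma card_KV (n : ℕ) : Fintype.card (KV n) = n + 2 * n.choose 2 := by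
  rw [Fintype.card_sum, Fintype.card_prod, Fintype.card_fin, card_KE]
  simp [Fintype.card_fin]
  ring

end Stmt15

/-- The double subdivision of `K n` (`n ≥ 2`) has gap 0, i.e.
`stp = n + 2 * C(n,2)`, the number of its vertices. -/
theorem stmt_15 (n : ℕ) (hn : 2 ≤ n) :
    (subdivKn n).gap = 0 ∧ (subdivKn n).stp = n + 2 * n.choose 2 := by
  have hstp : (subdivKn n).stp = Fintype.card (Stmt15.KV n) := by
    obtain ⟨C, hC, hcard⟩ := Stmt15.upper_bound hn
    apply le_antisymm
    · exact Nat.sInf_le ⟨C, hC, hcard⟩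
    · refine le_csInf ⟨_, C, hC, hcard⟩ ?_
      rintro k ⟨C', hC', rfl⟩
      exact Stmt15.lower_bound hn hC'
  constructor
  · rw [LoopGraph.gap, hstp]
    exact Nat.sub_self _
  · rw [hstp, Stmt15.card_KV]
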